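/- Bernstein-type condition for the Gaussian negative log-likelihood loss: there is a universal constant κ > 0 such that the following holds. Let 0 < c₃ < 1, 0 < γ ≤ 1, let σ², σ*² : 𝒳 → [c₃, 1/γ] and f : 𝒳 → [−1,1] be measurable, and assume the normalized residuals are uniformly bounded: (f*(x) − f(x) + s·√(σ*²(x)))² ≤ 4·c₂²·σ²(x) for every x ∈ 𝒳 and every s ∈ [−c₂, c₂]. With y = f*(x) + √(σ*²(x))·ξ, set Z(x,ξ) = (log σ²(x) + (y − f(x))²/σ²(x)) − (log σ*²(x) + (y − f*(x))²/σ*²(x)) on (𝒳 × ℝ, μ ⊗ ρ). Then Var[Z] ≤ κ·(C + c₂² + 1/c₃²)·E[Z], where C = 5c₂² + 2·log(c₂/γ). -/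

import Mathlib

open MeasureTheory

/-- For `0 < t ≤ 4`, `(t-1)^2 ≤ 9 * (t - 1 - log t)`. -/
lemma hlog_quad (t : ℝ) (ht : 0 < t) (ht4 : t ≤ 4) :
    (t - 1) ^ 2 ≤ 9 * (t - 1 - Real.log t) := by
  have hs : Real.sqrt t ^ 2 = t := Real.sq_sqrt ht.le
  have hs0 : 0 ≤ Real.sqrt t := Real.sqrt_nonneg t
  have hs2 : Real.sqrt t ≤ 2 := by nlinarith [Real.sq_sqrt ht.le]
  have hlog : Real.log t = 2 * Real.log (Real.sqrt t) := by
    conv_lhs => rw [← hs]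
    rw [Real.log_pow]; push_cast; ring
  have hl2 : Real.log (Real.sqrt t) ≤ Real.sqrt t - 1 :=
    Real.log_le_sub_one_of_pos (Real.sqrt_pos.mpr ht)
  nlinarith [sq_nonneg (Real.sqrt t - 1), sq_nonneg ((Real.sqrt t - 1) * (Real.sqrt t + 1))]

lemma hlog_nonneg (t : ℝ) (ht : 0 < t) : 0 ≤ t - 1 - Real.log t := by
  have := Real.log_le_sub_one_of_pos ht; linarith

set_option maxHeartbeats 1000000 in
theorem bernstein_nll_loss :
    ∃ κ : ℝ, 0 < κ ∧
      ∀ (𝒳 : Type) [MeasurableSpace 𝒳]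
        (μ : Measure 𝒳) [IsProbabilityMeasure μ]
        (c₂ : ℝ), 1 ≤ c₂ →
        ∀ (ρ : Measure ℝ) [IsProbabilityMeasure ρ],
        (∀ᵐ s ∂ρ, s ∈ Set.Icc (-c₂) c₂) →
        (∫ s, s ∂ρ) = 0 → (∫ s, s ^ 2 ∂ρ) = 1 →
        ∀ (fstar : 𝒳 → ℝ), Measurable fstar → (∀ x, fstar x ∈ Set.Icc (-1 : ℝ) 1) →
        ∀ (c₃ γ : ℝ), 0 < c₃ → c₃ < 1 → 0 < γ → γ ≤ 1 →
        ∀ (σsq σstarsq : 𝒳 → ℝ), Measurable σsq → Measurable σstarsq →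
        (∀ x, σsq x ∈ Set.Icc c₃ (1 / γ)) →
        (∀ x, σstarsq x ∈ Set.Icc c₃ (1 / γ)) →
        ∀ (f : 𝒳 → ℝ), Measurable f → (∀ x, f x ∈ Set.Icc (-1 : ℝ) 1) →
        (∀ x, ∀ s ∈ Set.Icc (-c₂) c₂,
          (fstar x - f x + s * Real.sqrt (σstarsq x)) ^ 2 ≤ 4 * c₂ ^ 2 * σsq x) →
        (∫ q : 𝒳 × ℝ,
            ((Real.log (σsq q.1)
                + (fstar q.1 + Real.sqrt (σstarsq q.1) * q.2 - f q.1) ^ 2 / σsq q.1)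
              - (Real.log (σstarsq q.1)
                + (fstar q.1 + Real.sqrt (σstarsq q.1) * q.2 - fstar q.1) ^ 2 / σstarsq q.1)) ^ 2
            ∂(μ.prod ρ))
          - (∫ q : 𝒳 × ℝ,
              ((Real.log (σsq q.1)
                  + (fstar q.1 + Real.sqrt (σstarsq q.1) * q.2 - f q.1) ^ 2 / σsq q.1)
                - (Real.log (σstarsq q.1)
                  + (fstar q.1 + Real.sqrt (σstarsq q.1) * q.2 - fstar q.1) ^ 2 / σstarsq q.1))
              ∂(μ.prod ρ)) ^ 2
          ≤ κ * ((5 * c₂ ^ 2 + 2 * Real.log (c₂ / γ)) + c₂ ^ 2 + 1 / c₃ ^ 2) *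
            ∫ q : 𝒳 × ℝ,
              ((Real.log (σsq q.1)
                  + (fstar q.1 + Real.sqrt (σstarsq q.1) * q.2 - f q.1) ^ 2 / σsq q.1)
                - (Real.log (σstarsq q.1)
                  + (fstar q.1 + Real.sqrt (σstarsq q.1) * q.2 - fstar q.1) ^ 2 / σstarsq q.1))
              ∂(μ.prod ρ) := by
  refine ⟨11, by norm_num, ?_⟩
  intro 𝒳 _ μ _ c₂ hc₂ ρ _ hρae hρ1 hρ2 fstar hfsm hfsb c₃ γ hc₃ hc₃1 hγ hγ1
    σsq σstarsq hσm hσsm hσb hσsb f hfm hfb hres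
  have hc₂0 : (0:ℝ) < c₂ := lt_of_lt_of_le one_pos hc₂
  -- basic positivity
  have h1 : ∀ x, 0 < σsq x := fun x => lt_of_lt_of_le hc₃ (hσb x).1
  have h2 : ∀ x, 0 < σstarsq x := fun x => lt_of_lt_of_le hc₃ (hσsb x).1
  set D : ℝ := (5 * c₂ ^ 2 + 2 * Real.log (c₂ / γ)) + c₂ ^ 2 + 1 / c₃ ^ 2 with hDdef
  set Z : 𝒳 × ℝ → ℝ := fun q =>
    (Real.log (σsq q.1)
        + (fstar q.1 + Real.sqrt (σstarsq q.1) * q.2 - f q.1) ^ 2 / σsq q.1)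
      - (Real.log (σstarsq q.1)
        + (fstar q.1 + Real.sqrt (σstarsq q.1) * q.2 - fstar q.1) ^ 2 / σstarsq q.1) with hZdef
  show (∫ q, (Z q) ^ 2 ∂(μ.prod ρ)) - (∫ q, Z q ∂(μ.prod ρ)) ^ 2
      ≤ 11 * D * ∫ q, Z q ∂(μ.prod ρ)
  set d : 𝒳 → ℝ := fun x => fstar x - f x with hddef
  set m : 𝒳 → ℝ := fun x =>
    Real.log (σsq x) - Real.log (σstarsq x) + d x ^ 2 / σsq x + σstarsq x / σsq x - 1
    with hmdef
  set A : 𝒳 → ℝ := fun x => 2 * d x * Real.sqrt (σstarsq x) / σsq x with hAdef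
  set B : 𝒳 → ℝ := fun x => σstarsq x / σsq x - 1 with hBdef
  have hlogpos : 0 ≤ Real.log (c₂ / γ) := by
    apply Real.log_nonneg
    rw [le_div_iff₀ hγ]; nlinarith
  have hD6 : 6 * c₂ ^ 2 ≤ D := by
    have : 0 < 1 / c₃ ^ 2 := by positivity
    rw [hDdef]; nlinarith
  have hD0 : 0 < D := by nlinarith
  -- residual bounds
  have hdb : ∀ x, d x ^ 2 ≤ 4 * c₂ ^ 2 * σsq x := by
    intro x
    have := hres x 0 ⟨by linarith, by linarith⟩
    simpa [hddef] using this
  have ht4 : ∀ x, σstarsq x ≤ 4 * σsq x := by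
    intro x
    have hp := hres x c₂ ⟨by linarith, le_refl _⟩
    have hn := hres x (-c₂) ⟨le_refl _, by linarith⟩
    have hr : Real.sqrt (σstarsq x) ^ 2 = σstarsq x := Real.sq_sqrt (h2 x).le
    have h5 : c₂ ^ 2 * σstarsq x ≤ c₂ ^ 2 * (4 * σsq x) := by
      nlinarith [sq_nonneg (fstar x - f x)]
    exact le_of_mul_le_mul_left h5 (by positivity)
  -- key pointwise identity
  have hZe : ∀ x s, Z (x, s) = m x + A x * s + B x * (s ^ 2 - 1) := by
    intro x s
    have hr : Real.sqrt (σstarsq x) ^ 2 = σstarsq x := Real.sq_sqrt (h2 x).le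
    have h1x := (h1 x).ne'
    have h2x := (h2 x).ne'
    simp only [hZdef, hmdef, hAdef, hBdef, hddef]
    generalize hg : Real.sqrt (σstarsq x) = r at hr ⊢
    rw [← hr] at h2x ⊢
    have hr0 : r ≠ 0 := by rintro rfl; simp at h2x
    field_simp
    ring
  -- pointwise inequalities
  have hkey : ∀ x, m x = (σstarsq x / σsq x - 1 - Real.log (σstarsq x / σsq x))
      + d x ^ 2 / σsq x := by
    intro x
    rw [Real.log_div (h2 x).ne' (h1 x).ne']
    simp only [hmdef]; ring
  have htpos : ∀ x, 0 < σstarsq x / σsq x := fun x => div_pos (h2 x) (h1 x)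
  have ht4' : ∀ x, σstarsq x / σsq x ≤ 4 := fun x =>
    (div_le_iff₀ (h1 x)).mpr (by linarith [ht4 x])
  have hm0 : ∀ x, 0 ≤ m x := by
    intro x
    rw [hkey x]
    have hq1 := hlog_nonneg _ (htpos x)
    have hq2 : 0 ≤ d x ^ 2 / σsq x := div_nonneg (sq_nonneg _) (h1 x).le
    linarith
  have hdσ : ∀ x, d x ^ 2 / σsq x ≤ 4 * c₂ ^ 2 := fun x =>
    (div_le_iff₀ (h1 x)).mpr (by linarith [hdb x])
  have hmD : ∀ x, m x ≤ 2 * D := by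
    intro x
    rw [hkey x]
    have hlogt : Real.log (γ * c₃) ≤ Real.log (σstarsq x / σsq x) := by
      apply Real.log_le_log (by positivity)
      rw [le_div_iff₀ (h1 x)]
      calc γ * c₃ * σsq x ≤ γ * c₃ * (1/γ) := by
            apply mul_le_mul_of_nonneg_left (hσb x).2 (by positivity)
        _ = c₃ := by field_simp
        _ ≤ σstarsq x := (hσsb x).1
    have hlγc : Real.log (γ * c₃) = Real.log γ + Real.log c₃ :=
      Real.log_mul hγ.ne' hc₃.ne'
    have hlc2 : Real.log (c₂ / γ) = Real.log c₂ - Real.log γ :=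
      Real.log_div hc₂0.ne' hγ.ne'
    have hlc₂0 : 0 ≤ Real.log c₂ := Real.log_nonneg hc₂
    have hlc₃ : -Real.log c₃ ≤ 1 / c₃ - 1 := by
      have h := Real.log_le_sub_one_of_pos (show (0:ℝ) < 1/c₃ by positivity)
      rw [one_div, Real.log_inv] at h
      rw [one_div]; linarith
    have hc₃sq : 1 / c₃ ≤ 1 / c₃ ^ 2 := by
      rw [div_le_div_iff₀ hc₃ (by positivity)]
      nlinarith
    have hu1 := ht4' x
    have hu2 := hdσ x
    have hc₂sq : (1:ℝ) ≤ c₂ ^ 2 := by nlinarith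
    have hpos1 : (0:ℝ) < 1 / c₃ ^ 2 := by positivity
    rw [hDdef]
    linarith [hlogt]
  have hA2 : ∀ x, A x ^ 2 ≤ 16 * m x := by
    intro x
    have hr : Real.sqrt (σstarsq x) ^ 2 = σstarsq x := Real.sq_sqrt (h2 x).le
    have hA2eq : A x ^ 2 = 4 * (d x ^ 2 / σsq x) * (σstarsq x / σsq x) := by
      simp only [hAdef]
      generalize hg : Real.sqrt (σstarsq x) = r at hr ⊢
      rw [← hr]
      field_simp
      ring
    rw [hA2eq, hkey x]
    have h1' := hlog_nonneg _ (htpos x)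
    have h2' : 0 ≤ d x ^ 2 / σsq x := div_nonneg (sq_nonneg _) (h1 x).le
    nlinarith [ht4' x, htpos x]
  have hB2 : ∀ x, B x ^ 2 ≤ 9 * m x := by
    intro x
    have hq := hlog_quad _ (htpos x) (ht4' x)
    have h2' : 0 ≤ d x ^ 2 / σsq x := div_nonneg (sq_nonneg _) (h1 x).le
    rw [hkey x]; simp only [hBdef]
    linarith
  -- integrability over ρ
  have hI : ∀ k : ℕ, Integrable (fun s : ℝ => s ^ k) ρ := by
    intro k
    refine ⟨(measurable_id.pow_const k).aestronglyMeasurable,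
      HasFiniteIntegral.of_bounded (C := c₂ ^ k) ?_⟩
    filter_upwards [hρae] with s hs
    rw [Real.norm_eq_abs, abs_pow]
    exact pow_le_pow_left₀ (abs_nonneg s) (abs_le.mpr ⟨hs.1, hs.2⟩) k
  have hI1 : Integrable (fun s : ℝ => s) ρ := by simpa using hI 1
  set J3 : ℝ := ∫ s, s ^ 3 ∂ρ with hJ3def
  set J4 : ℝ := ∫ s, s ^ 4 ∂ρ with hJ4def
  have hJ3 : |J3| ≤ c₂ := by
    have h1' : |J3| ≤ ∫ s, |s ^ 3| ∂ρ := by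
      rw [hJ3def]
      have h := norm_integral_le_integral_norm (μ := ρ) (fun s : ℝ => s ^ 3)
      simp only [Real.norm_eq_abs] at h
      exact h
    have h2' : (∫ s, |s ^ 3| ∂ρ) ≤ ∫ s, c₂ * s ^ 2 ∂ρ := by
      apply integral_mono_ae (hI 3).abs ((hI 2).const_mul c₂)
      filter_upwards [hρae] with s hs
      have hsc : |s| ≤ c₂ := abs_le.mpr ⟨hs.1, hs.2⟩
      have : |s ^ 3| = |s| * s ^ 2 := by
        rw [abs_pow]
        rw [← sq_abs]
        ring
      rw [this]
      nlinarith [sq_nonneg s, abs_nonneg s]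
    rw [integral_const_mul, hρ2, mul_one] at h2'
    linarith
  have hJ4 : J4 ≤ c₂ ^ 2 := by
    have h2' : J4 ≤ ∫ s, c₂ ^ 2 * s ^ 2 ∂ρ := by
      rw [hJ4def]
      apply integral_mono_ae (hI 4) ((hI 2).const_mul _)
      filter_upwards [hρae] with s hs
      have hsc : |s| ≤ c₂ := abs_le.mpr ⟨hs.1, hs.2⟩
      have hs2 : s ^ 2 ≤ c₂ ^ 2 := by nlinarith [sq_abs s, abs_nonneg s]
      nlinarith [sq_nonneg s]
    rw [integral_const_mul, hρ2, mul_one] at h2'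
    exact h2'
  -- per-x first moment
  have hsub : Integrable (fun s : ℝ => s ^ 2 - 1) ρ := (hI 2).sub (integrable_const 1)
  have hEsub : (∫ s, (s ^ 2 - 1) ∂ρ) = 0 := by
    rw [integral_sub (hI 2) (integrable_const 1), hρ2]
    simp
  have hEZ : ∀ x, (∫ s, Z (x, s) ∂ρ) = m x := by
    intro x
    have he : (fun s => Z (x, s)) = fun s => m x + A x * s + B x * (s ^ 2 - 1) :=
      funext fun s => hZe x s
    have ia : Integrable (fun s : ℝ => m x + A x * s) ρ := by
      simpa using (integrable_const (μ := ρ) (m x)).add (hI1.const_mul (A x))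
    rw [he, integral_add ia (hsub.const_mul _),
      integral_add (integrable_const _) (hI1.const_mul _),
      integral_const_mul, integral_const_mul, hρ1, hEsub]
    simp
  -- per-x second moment
  have hEZ2 : ∀ x, (∫ s, Z (x, s) ^ 2 ∂ρ)
      = m x ^ 2 + A x ^ 2 + B x ^ 2 * (J4 - 1) + 2 * A x * B x * J3 := by
    intro x
    have he : (fun s => Z (x, s) ^ 2) = fun s =>
        (m x ^ 2 + B x ^ 2 - 2 * m x * B x)
        + (2 * m x * A x - 2 * A x * B x) * s
        + (A x ^ 2 - 2 * B x ^ 2 + 2 * m x * B x) * s ^ 2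
        + (2 * A x * B x) * s ^ 3
        + B x ^ 2 * s ^ 4 := by
      funext s; rw [hZe x s]; ring
    rw [he]
    set C0 : ℝ := m x ^ 2 + B x ^ 2 - 2 * m x * B x with hC0
    set C1 : ℝ := 2 * m x * A x - 2 * A x * B x with hC1
    set C2 : ℝ := A x ^ 2 - 2 * B x ^ 2 + 2 * m x * B x with hC2
    set C3 : ℝ := 2 * A x * B x with hC3
    have ia1 : Integrable (fun s : ℝ => C0 + C1 * s) ρ := by
      simpa using (integrable_const (μ := ρ) C0).add (hI1.const_mul C1)
    have ia2 : Integrable (fun s : ℝ => C0 + C1 * s + C2 * s ^ 2) ρ := by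
      exact ia1.add ((hI 2).const_mul C2)
    have ia3 : Integrable (fun s : ℝ => C0 + C1 * s + C2 * s ^ 2 + C3 * s ^ 3) ρ := by
      exact ia2.add ((hI 3).const_mul C3)
    rw [integral_add ia3 ((hI 4).const_mul _),
      integral_add ia2 ((hI 3).const_mul _),
      integral_add ia1 ((hI 2).const_mul _),
      integral_add (integrable_const _) (hI1.const_mul _),
      integral_const_mul, integral_const_mul, integral_const_mul, integral_const_mul,
      hρ1, hρ2]
    simp only [integral_const, probReal_univ, measure_univ, ENNReal.toReal_one, one_smul, smul_eq_mul]
    ring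
  have hEZ2le : ∀ x, (∫ s, Z (x, s) ^ 2 ∂ρ) ≤ 11 * D * m x := by
    intro x
    rw [hEZ2 x]
    have habs : 2 * A x * B x * J3 ≤ c₂ * (A x ^ 2 + B x ^ 2) := by
      have h1' : 2 * A x * B x * J3 ≤ |2 * A x * B x * J3| := le_abs_self _
      have h2' : |2 * A x * B x * J3| = 2 * |A x| * |B x| * |J3| := by
        rw [abs_mul, abs_mul, abs_mul]; simp [abs_of_nonneg]
      have h3' : 2 * |A x| * |B x| * |J3| ≤ 2 * |A x| * |B x| * c₂ := by
        apply mul_le_mul_of_nonneg_left hJ3 (by positivity)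
      have h4' : 2 * |A x| * |B x| * c₂ ≤ (A x ^ 2 + B x ^ 2) * c₂ := by
        apply mul_le_mul_of_nonneg_right _ hc₂0.le
        nlinarith [sq_nonneg (|A x| - |B x|), sq_abs (A x), sq_abs (B x)]
      nlinarith
    have hBJ : B x ^ 2 * (J4 - 1) ≤ B x ^ 2 * c₂ ^ 2 := by
      apply mul_le_mul_of_nonneg_left _ (sq_nonneg _)
      nlinarith
    have hmsq : m x ^ 2 ≤ 2 * D * m x := by nlinarith [hm0 x, hmD x]
    have hm := hm0 x
    have t4 : c₂ ≤ c₂ ^ 2 := by nlinarith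
    have t1 : (1 + c₂) * A x ^ 2 ≤ (1 + c₂) * (16 * m x) :=
      mul_le_mul_of_nonneg_left (hA2 x) (by positivity)
    have t2 : (c₂ ^ 2 + c₂) * B x ^ 2 ≤ (c₂ ^ 2 + c₂) * (9 * m x) :=
      mul_le_mul_of_nonneg_left (hB2 x) (by positivity)
    have t5 : c₂ * m x ≤ c₂ ^ 2 * m x := mul_le_mul_of_nonneg_right t4 hm
    have t6 : m x ≤ c₂ ^ 2 * m x := by nlinarith
    have t7 : 6 * c₂ ^ 2 * m x ≤ D * m x := by
      calc 6 * c₂ ^ 2 * m x = (6 * c₂ ^ 2) * m x := by ring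
        _ ≤ D * m x := mul_le_mul_of_nonneg_right hD6 hm
    linarith [habs, hBJ, hmsq, t1, t2, t5, t6, t7]
  -- measurability of Z
  have hYm : Measurable fun q : 𝒳 × ℝ =>
      fstar q.1 + Real.sqrt (σstarsq q.1) * q.2 :=
    (hfsm.comp measurable_fst).add
      (((Real.continuous_sqrt.measurable.comp hσsm).comp measurable_fst).mul measurable_snd)
  have hZmeas : Measurable Z := by
    simp only [hZdef]
    exact ((((Real.measurable_log.comp hσm).comp measurable_fst)).add
        (((hYm.sub (hfm.comp measurable_fst)).pow_const 2).div (hσm.comp measurable_fst))).sub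
      ((((Real.measurable_log.comp hσsm).comp measurable_fst)).add
        (((hYm.sub (hfsm.comp measurable_fst)).pow_const 2).div (hσsm.comp measurable_fst)))
  -- a.e. bound on Z over the product
  have hq2 : ∀ᵐ q ∂(μ.prod ρ), q.2 ∈ Set.Icc (-c₂) c₂ :=
    Measure.quasiMeasurePreserving_snd.ae hρae
  set Bd : ℝ := 2 * (Real.log (1 / γ) - Real.log c₃) + 5 * c₂ ^ 2 with hBddef
  have hlog1γ : 0 ≤ Real.log (1 / γ) := Real.log_nonneg (by rw [le_div_iff₀ hγ]; linarith)
  have hlogc₃' : Real.log c₃ ≤ 0 := Real.log_nonpos hc₃.le hc₃1.le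
  have hlogbd : ∀ x, |Real.log (σsq x)| ≤ Real.log (1 / γ) - Real.log c₃ := by
    intro x
    rw [abs_le]
    constructor
    · have := Real.log_le_log hc₃ (hσb x).1
      linarith
    · have := Real.log_le_log (h1 x) (hσb x).2
      linarith
  have hlogbd' : ∀ x, |Real.log (σstarsq x)| ≤ Real.log (1 / γ) - Real.log c₃ := by
    intro x
    rw [abs_le]
    constructor
    · have := Real.log_le_log hc₃ (hσsb x).1
      linarith
    · have := Real.log_le_log (h2 x) (hσsb x).2
      linarith
  have hZbd : ∀ᵐ q ∂(μ.prod ρ), ‖Z q‖ ≤ Bd := by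
    filter_upwards [hq2] with q hs
    obtain ⟨x, s⟩ := q
    have hr : Real.sqrt (σstarsq x) ^ 2 = σstarsq x := Real.sq_sqrt (h2 x).le
    have hterm1 : (fstar x + Real.sqrt (σstarsq x) * s - f x) ^ 2 / σsq x ≤ 4 * c₂ ^ 2 := by
      rw [div_le_iff₀ (h1 x)]
      have := hres x s hs
      calc (fstar x + Real.sqrt (σstarsq x) * s - f x) ^ 2
          = (fstar x - f x + s * Real.sqrt (σstarsq x)) ^ 2 := by ring
        _ ≤ 4 * c₂ ^ 2 * σsq x := this
    have hterm1' : 0 ≤ (fstar x + Real.sqrt (σstarsq x) * s - f x) ^ 2 / σsq x :=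
      div_nonneg (sq_nonneg _) (h1 x).le
    have hterm2 : (fstar x + Real.sqrt (σstarsq x) * s - fstar x) ^ 2 / σstarsq x = s ^ 2 := by
      have e1 : (fstar x + Real.sqrt (σstarsq x) * s - fstar x) ^ 2
          = Real.sqrt (σstarsq x) ^ 2 * s ^ 2 := by ring
      rw [e1, hr, mul_comm (σstarsq x) (s ^ 2), mul_div_assoc,
        div_self (h2 x).ne', mul_one]
    have hs2 : s ^ 2 ≤ c₂ ^ 2 := by
      have : |s| ≤ c₂ := abs_le.mpr ⟨hs.1, hs.2⟩
      nlinarith [sq_abs s, abs_nonneg s]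
    have hs2' : 0 ≤ s ^ 2 := sq_nonneg s
    have hl1 := abs_le.mp (hlogbd x)
    have hl2 := abs_le.mp (hlogbd' x)
    rw [Real.norm_eq_abs, abs_le]
    simp only [hZdef]
    rw [hterm2]
    constructor <;> [nlinarith; nlinarith]
  have hIntZ : Integrable Z (μ.prod ρ) :=
    ⟨hZmeas.aestronglyMeasurable, HasFiniteIntegral.of_bounded hZbd⟩
  have hIntZ2 : Integrable (fun q => Z q ^ 2) (μ.prod ρ) := by
    refine ⟨(hZmeas.pow_const 2).aestronglyMeasurable,
      HasFiniteIntegral.of_bounded (C := Bd ^ 2) ?_⟩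
    filter_upwards [hZbd] with q hq
    rw [Real.norm_eq_abs] at hq
    rw [Real.norm_eq_abs, abs_pow]
    nlinarith [abs_nonneg (Z q)]
  -- m measurable + integrable
  have hmmeas : Measurable m := by
    simp only [hmdef, hddef]
    exact ((((Real.measurable_log.comp hσm).sub (Real.measurable_log.comp hσsm)).add
      (((hfsm.sub hfm).pow_const 2).div hσm)).add (hσsm.div hσm)).sub measurable_const
  have hIntm : Integrable m μ := by
    refine ⟨hmmeas.aestronglyMeasurable, HasFiniteIntegral.of_bounded (C := 2 * D) ?_⟩
    filter_upwards with x
    rw [Real.norm_eq_abs, abs_le]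
    exact ⟨by linarith [hm0 x, hD0], hmD x⟩
  -- Fubini
  have hEq1 : (∫ q, Z q ∂(μ.prod ρ)) = ∫ x, m x ∂μ := by
    rw [integral_prod _ hIntZ]
    exact integral_congr_ae (Filter.Eventually.of_forall fun x => hEZ x)
  have hEq2 : (∫ q, Z q ^ 2 ∂(μ.prod ρ)) ≤ 11 * D * ∫ x, m x ∂μ := by
    rw [integral_prod _ hIntZ2]
    calc (∫ x, ∫ s, Z (x, s) ^ 2 ∂ρ ∂μ) ≤ ∫ x, 11 * D * m x ∂μ := by
          apply integral_mono hIntZ2.integral_prod_left (hIntm.const_mul _)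
          intro x
          exact hEZ2le x
      _ = 11 * D * ∫ x, m x ∂μ := integral_const_mul _ _
  have hmnn : 0 ≤ ∫ x, m x ∂μ := integral_nonneg hm0
  rw [hEq1]
  linarith [hEq2, sq_nonneg (∫ x, m x ∂μ)]
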